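/- Let a, b, c, d, σ ∈ ℝ, let λ > 0 and m ∈ (0,1], and let C, S, D : ℝ → ℝ be differentiable functions satisfying the Jacobi cnoidal identities. Suppose the real numbers j0, j1, j2, k0, k1, k2 satisfy the coefficient system (coeffs 1). Then the functions η(ξ) = j0 + j1·C(ξ) + j2·C(ξ)² and w(ξ) = k0 + k1·C(ξ) + k2·C(ξ)² satisfy, for all ξ ∈ ℝ, the traveling-wave ODE system of the abcd-system: −σ·η′(ξ) + w′(ξ) + (η·w)′(ξ) + a·w‴(ξ) + b·σ·η‴(ξ) = 0 and −σ·w′(ξ) + η′(ξ) + w(ξ)·w′(ξ) + c·η‴(ξ) + d·σ·w‴(ξ) = 0. -/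

import Mathlib

/-- If the coefficients `j0,j1,j2,k0,k1,k2` satisfy the coefficient system
(coeffs 1), then the quadratic cnoidal ansatz solves the traveling-wave ODE system of
the abcd-system. -/
theorem abcd_cnoidal_quadratic_solution
    (a b c d σ lam m : ℝ) (hlam : 0 < lam) (hm : m ∈ Set.Ioc (0 : ℝ) 1)
    (C S D : ℝ → ℝ)
    (hC : Differentiable ℝ C) (hS : Differentiable ℝ S) (hD : Differentiable ℝ D)
    (hSid : ∀ ξ : ℝ, S ξ ^ 2 = 1 - C ξ ^ 2)
    (hDid : ∀ ξ : ℝ, D ξ ^ 2 = 1 - m ^ 2 + m ^ 2 * C ξ ^ 2)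
    (hC' : ∀ ξ : ℝ, deriv C ξ = -lam * S ξ * D ξ)
    (hS' : ∀ ξ : ℝ, deriv S ξ = lam * C ξ * D ξ)
    (hD' : ∀ ξ : ℝ, deriv D ξ = -m ^ 2 * lam * C ξ * S ξ)
    (j0 j1 j2 k0 k1 k2 : ℝ)
    (h13 : -24*b*lam^2*m^2*σ*j2 - 24*a*lam^2*m^2*k2 + 4*j2*k2 = 0)
    (h12 : -6*b*lam^2*m^2*σ*j1 - 6*a*lam^2*m^2*k1 + 3*j1*k2 + 3*j2*k1 = 0)
    (h11 : 16*b*lam^2*m^2*σ*j2 + 16*a*lam^2*m^2*k2 - 8*b*lam^2*σ*j2 - 8*a*lam^2*k2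
        - 2*σ*j2 + 2*j0*k2 + 2*j1*k1 + 2*j2*k0 + 2*k2 = 0)
    (h10 : 2*b*lam^2*m^2*σ*j1 + 2*a*lam^2*m^2*k1 - b*lam^2*σ*j1 - a*lam^2*k1
        - σ*j1 + j0*k1 + j1*k0 + k1 = 0)
    (h23 : -24*d*lam^2*m^2*σ*k2 - 24*c*lam^2*m^2*j2 + 2*k2^2 = 0)
    (h22 : -6*d*lam^2*m^2*σ*k1 - 6*c*lam^2*m^2*j1 + 3*k1*k2 = 0)
    (h21 : 16*d*lam^2*m^2*σ*k2 + 16*c*lam^2*m^2*j2 - 8*d*lam^2*σ*k2 - 8*c*lam^2*j2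
        - 2*σ*k2 + 2*k0*k2 + k1^2 + 2*j2 = 0)
    (h20 : 2*d*lam^2*m^2*σ*k1 + 2*c*lam^2*m^2*j1 - d*lam^2*σ*k1 - c*lam^2*j1
        - σ*k1 + k0*k1 + j1 = 0)
    (η w : ℝ → ℝ)
    (hη : ∀ x : ℝ, η x = j0 + j1 * C x + j2 * C x ^ 2)
    (hw : ∀ x : ℝ, w x = k0 + k1 * C x + k2 * C x ^ 2) :
    ∀ ξ : ℝ,
      (-σ * deriv η ξ + deriv w ξ + deriv (fun x => η x * w x) ξ
        + a * deriv (deriv (deriv w)) ξ + b * σ * deriv (deriv (deriv η)) ξ = 0) ∧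
      (-σ * deriv w ξ + deriv η ξ + w ξ * deriv w ξ
        + c * deriv (deriv (deriv η)) ξ + d * σ * deriv (deriv (deriv w)) ξ = 0) := by
  -- substitute the ansatz
  obtain rfl : η = fun x => j0 + j1 * C x + j2 * C x ^ 2 := funext hη
  obtain rfl : w = fun x => k0 + k1 * C x + k2 * C x ^ 2 := funext hw
  -- basic HasDerivAt facts
  have hCd : ∀ x : ℝ, HasDerivAt C (-lam * S x * D x) x := fun x => hC' x ▸ (hC x).hasDerivAt
  have hSd : ∀ x : ℝ, HasDerivAt S (lam * C x * D x) x := fun x => hS' x ▸ (hS x).hasDerivAt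
  have hDd : ∀ x : ℝ, HasDerivAt D (-m ^ 2 * lam * C x * S x) x := fun x => hD' x ▸ (hD x).hasDerivAt
  -- derivative of a quadratic in C
  have hP2 : ∀ (r0 r1 r2 x : ℝ), HasDerivAt (fun y => r0 + r1 * C y + r2 * C y ^ 2)
      ((-(lam * r1) + -(2 * lam * r2) * C x) * (S x * D x)) x := by
    intro r0 r1 r2 x
    have h := (((hCd x).const_mul r1).const_add r0).add (((hCd x).pow 2).const_mul r2)
    refine h.congr_deriv ?_
    push_cast
    ring
  -- derivative of a quartic in C
  have hP4 : ∀ (r0 r1 r2 r3 r4 x : ℝ),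
      HasDerivAt (fun y => r0 + r1 * C y + r2 * C y ^ 2 + r3 * C y ^ 3 + r4 * C y ^ 4)
      ((r1 + 2 * r2 * C x + 3 * r3 * C x ^ 2 + 4 * r4 * C x ^ 3) * (-lam * S x * D x)) x := by
    intro r0 r1 r2 r3 r4 x
    have h := ((((((hCd x).const_mul r1).const_add r0).add
      (((hCd x).pow 2).const_mul r2)).add (((hCd x).pow 3).const_mul r3)).add
      (((hCd x).pow 4).const_mul r4))
    refine h.congr_deriv ?_
    push_cast
    ring
  -- derivative of (q0 + q1 C) * (S D)
  have hSD : ∀ (q0 q1 x : ℝ), HasDerivAt (fun y => (q0 + q1 * C y) * (S y * D y))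
      (q1 * (-lam * S x * D x) * (S x * D x) +
        (q0 + q1 * C x) * (lam * C x * D x * D x + S x * (-m ^ 2 * lam * C x * S x))) x := by
    intro q0 q1 x
    exact (((hCd x).const_mul q1).const_add q0).mul ((hSd x).mul (hDd x))
  -- first derivatives
  have d1η : deriv (fun y => j0 + j1 * C y + j2 * C y ^ 2)
      = fun x => (-(lam * j1) + -(2 * lam * j2) * C x) * (S x * D x) :=
    funext fun x => (hP2 j0 j1 j2 x).deriv
  have d1w : deriv (fun y => k0 + k1 * C y + k2 * C y ^ 2)
      = fun x => (-(lam * k1) + -(2 * lam * k2) * C x) * (S x * D x) :=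
    funext fun x => (hP2 k0 k1 k2 x).deriv
  -- second derivatives (as quartic polynomials in C, using the identities)
  have d2gen : ∀ (q0 q1 : ℝ), deriv (fun y => (q0 + q1 * C y) * (S y * D y))
      = fun x => (-(lam * q1 * (1 - m ^ 2))) + (lam * q0 * (1 - 2 * m ^ 2)) * C x
        + (2 * lam * q1 * (1 - 2 * m ^ 2)) * C x ^ 2 + (2 * lam * q0 * m ^ 2) * C x ^ 3
        + (3 * lam * q1 * m ^ 2) * C x ^ 4 := by
    intro q0 q1
    funext x
    rw [(hSD q0 q1 x).deriv]
    linear_combination (-(lam * q1 * D x ^ 2) - m ^ 2 * lam * (q0 + q1 * C x) * C x) * hSid x +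
      (-(lam * q1 * (1 - C x ^ 2)) + lam * (q0 + q1 * C x) * C x) * hDid x
  -- third derivatives
  have d3η : ∀ x : ℝ, deriv (deriv (fun y => (-(lam * j1) + -(2 * lam * j2) * C y) * (S y * D y))) x
      = ((lam * -(lam * j1) * (1 - 2 * m ^ 2)) + 2 * (2 * lam * -(2 * lam * j2) * (1 - 2 * m ^ 2)) * C x
        + 3 * (2 * lam * -(lam * j1) * m ^ 2) * C x ^ 2 + 4 * (3 * lam * -(2 * lam * j2) * m ^ 2) * C x ^ 3)
        * (-lam * S x * D x) := by
    intro x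
    rw [d2gen (-(lam * j1)) (-(2 * lam * j2))]
    exact (hP4 _ _ _ _ _ x).deriv
  have d3w : ∀ x : ℝ, deriv (deriv (fun y => (-(lam * k1) + -(2 * lam * k2) * C y) * (S y * D y))) x
      = ((lam * -(lam * k1) * (1 - 2 * m ^ 2)) + 2 * (2 * lam * -(2 * lam * k2) * (1 - 2 * m ^ 2)) * C x
        + 3 * (2 * lam * -(lam * k1) * m ^ 2) * C x ^ 2 + 4 * (3 * lam * -(2 * lam * k2) * m ^ 2) * C x ^ 3)
        * (-lam * S x * D x) := by
    intro x
    rw [d2gen (-(lam * k1)) (-(2 * lam * k2))]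
    exact (hP4 _ _ _ _ _ x).deriv
  -- product derivative
  have dprod : ∀ x : ℝ,
      deriv (fun y => (j0 + j1 * C y + j2 * C y ^ 2) * (k0 + k1 * C y + k2 * C y ^ 2)) x
      = (-(lam * j1) + -(2 * lam * j2) * C x) * (S x * D x) * (k0 + k1 * C x + k2 * C x ^ 2)
        + (j0 + j1 * C x + j2 * C x ^ 2) * ((-(lam * k1) + -(2 * lam * k2) * C x) * (S x * D x)) :=
    fun x => ((hP2 j0 j1 j2 x).mul (hP2 k0 k1 k2 x)).deriv
  intro ξ
  beta_reduce
  constructor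
  · rw [d1η, d1w]
    beta_reduce
    rw [dprod ξ, d3η ξ, d3w ξ]
    linear_combination (-(lam * S ξ * D ξ * C ξ ^ 3)) * h13 + (-(lam * S ξ * D ξ * C ξ ^ 2)) * h12
      + (-(lam * S ξ * D ξ * C ξ)) * h11 + (-(lam * S ξ * D ξ)) * h10
  · rw [d1η, d1w]
    beta_reduce
    rw [d3η ξ, d3w ξ]
    linear_combination (-(lam * S ξ * D ξ * C ξ ^ 3)) * h23 + (-(lam * S ξ * D ξ * C ξ ^ 2)) * h22
      + (-(lam * S ξ * D ξ * C ξ)) * h21 + (-(lam * S ξ * D ξ)) * h20
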